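/- Let ℍ^d = {x ∈ ℝ^d : x₁ > 0} be the open half-space, d ≥ 2, k ∈ {1,…,d−1}. For x ∈ ℍ^d and nonzero v ∈ ℝ^d, δ^{(k)}_{ℍ^d}(x,v) := sup{dist(x, (x+V) ∩ ∂ℍ^d) : V a k-dim subspace containing v} satisfies ‖v‖/(2 δ^{(k)}_{ℍ^d}(x,v)) = |v₁|/(2x₁); that is, δ^{(k)}_{ℍ^d}(x,v) = x₁·‖v‖/|v₁| when v₁ ≠ 0, and δ^{(k)}_{ℍ^d}(x,v) = +∞ (so the metric is 0) when v₁ = 0. -/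

import Mathlib

open Module Submodule

-- coordinate linear map
def coordLM (d : ℕ) (i : Fin d) : EuclideanSpace ℝ (Fin d) →ₗ[ℝ] ℝ where
  toFun y := y i
  map_add' _ _ := rfl
  map_smul' _ _ := rfl

lemma aux_exists {E : Type*} [NormedAddCommGroup E] [NormedSpace ℝ E]
    [FiniteDimensional ℝ E] (W : Submodule ℝ E) (n : ℕ) (hn : n ≤ finrank ℝ W) :
    ∃ U : Submodule ℝ E, U ≤ W ∧ finrank ℝ U = n := by
  obtain ⟨f, hf⟩ := exists_linearIndependent_of_le_finrank (R := ℝ) (M := W) (n := n) hn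
  have hg : LinearIndependent ℝ (W.subtype ∘ f) := hf.map' W.subtype W.ker_subtype
  refine ⟨span ℝ (Set.range (W.subtype ∘ f)), ?_, ?_⟩
  · rw [span_le]
    rintro _ ⟨j, rfl⟩; exact (f j).2
  · rw [finrank_span_eq_card hg, Fintype.card_fin]

lemma key (d k : ℕ) (hd : 2 ≤ d) (hk1 : 1 ≤ k) (hk2 : k ≤ d - 1) (i : Fin d)
    (v : EuclideanSpace ℝ (Fin d)) (hv : v ≠ 0) :
    ∃ V : Submodule ℝ (EuclideanSpace ℝ (Fin d)), finrank ℝ V = k ∧ v ∈ V ∧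
      ∀ w ∈ V, ∃ (c : ℝ) (b : EuclideanSpace ℝ (Fin d)),
        w = c • v + b ∧ b i = 0 ∧ inner ℝ v b = 0 := by
  have hdim : finrank ℝ (EuclideanSpace ℝ (Fin d)) = d := finrank_euclideanSpace_fin
  have hsurj : Function.Surjective (coordLM d i) := fun c =>
    ⟨EuclideanSpace.single i c, by
      show (EuclideanSpace.single i c : EuclideanSpace ℝ (Fin d)) i = c; simp⟩
  have hLrank : finrank ℝ (LinearMap.ker (coordLM d i)) = d - 1 := by
    have h := LinearMap.finrank_range_add_finrank_ker (coordLM d i)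
    rw [LinearMap.range_eq_top.mpr hsurj, finrank_top, hdim, finrank_self] at h
    omega
  have hPrank : finrank ℝ ((ℝ ∙ v)ᗮ : Submodule ℝ (EuclideanSpace ℝ (Fin d))) = d - 1 := by
    have h1 : finrank ℝ (ℝ ∙ v : Submodule ℝ (EuclideanSpace ℝ (Fin d))) = 1 :=
      finrank_span_singleton hv
    have h := Submodule.finrank_add_finrank_orthogonal
      (ℝ ∙ v : Submodule ℝ (EuclideanSpace ℝ (Fin d)))
    rw [h1, hdim] at h; omega
  have hWrank : k - 1 ≤ finrank ℝ
      (LinearMap.ker (coordLM d i) ⊓ (ℝ ∙ v)ᗮ : Submodule ℝ (EuclideanSpace ℝ (Fin d))) := by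
    have h1 := Submodule.finrank_sup_add_finrank_inf_eq
      (LinearMap.ker (coordLM d i)) ((ℝ ∙ v)ᗮ)
    have h2 : finrank ℝ (LinearMap.ker (coordLM d i) ⊔ (ℝ ∙ v)ᗮ :
        Submodule ℝ (EuclideanSpace ℝ (Fin d))) ≤ d :=
      le_trans (Submodule.finrank_le _) (le_of_eq hdim)
    omega
  obtain ⟨U, hUle, hUrank⟩ := aux_exists (LinearMap.ker (coordLM d i) ⊓ (ℝ ∙ v)ᗮ)
    (k - 1) hWrank
  refine ⟨(ℝ ∙ v) ⊔ U, ?_, Submodule.mem_sup_left (mem_span_singleton_self v), ?_⟩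
  · have hinf : (ℝ ∙ v) ⊓ U = ⊥ := by
      rw [eq_bot_iff]
      rintro w ⟨hw1, hw2⟩
      have hwP : w ∈ ((ℝ ∙ v)ᗮ : Submodule ℝ (EuclideanSpace ℝ (Fin d))) := (hUle hw2).2
      have hww : inner ℝ w w = 0 := by
        exact hwP w hw1
      simpa using inner_self_eq_zero.mp hww
    have h := Submodule.finrank_sup_add_finrank_inf_eq (ℝ ∙ v) U
    rw [hinf, finrank_span_singleton hv, hUrank, finrank_bot] at h
    omega
  · intro w hw
    rw [Submodule.mem_sup] at hw
    obtain ⟨a, ha, b, hb, rfl⟩ := hw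
    obtain ⟨c, rfl⟩ := mem_span_singleton.mp ha
    refine ⟨c, b, rfl, (hUle hb).1, ?_⟩
    have h := (hUle hb).2 v (mem_span_singleton_self v)
    exact h




theorem stmt_12 (d k : ℕ) (hd : 2 ≤ d) (hk1 : 1 ≤ k) (hk2 : k ≤ d - 1)
    (x v : EuclideanSpace ℝ (Fin d)) (hv : v ≠ 0)
    (hx : 0 < x ⟨0, by omega⟩) :
    (v ⟨0, by omega⟩ ≠ 0 →
      (⨆ V ∈ {V : Submodule ℝ (EuclideanSpace ℝ (Fin d)) |
          Module.finrank ℝ V = k ∧ v ∈ V},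
        EMetric.infEdist x
          ({z : EuclideanSpace ℝ (Fin d) | ∃ w ∈ V, z = x + w} ∩
            {y : EuclideanSpace ℝ (Fin d) | y ⟨0, by omega⟩ = 0}))
      = ENNReal.ofReal (x ⟨0, by omega⟩ * ‖v‖ / |v ⟨0, by omega⟩|)) ∧
    (v ⟨0, by omega⟩ = 0 →
      (⨆ V ∈ {V : Submodule ℝ (EuclideanSpace ℝ (Fin d)) |
          Module.finrank ℝ V = k ∧ v ∈ V},
        EMetric.infEdist x
          ({z : EuclideanSpace ℝ (Fin d) | ∃ w ∈ V, z = x + w} ∩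
            {y : EuclideanSpace ℝ (Fin d) | y ⟨0, by omega⟩ = 0})) = ⊤) := by
  obtain ⟨V₀, hV₀k, hvV₀, hV₀prop⟩ := key d k hd hk1 hk2 ⟨0, by omega⟩ v hv
  constructor
  · intro hv1
    apply le_antisymm
    · refine iSup₂_le fun V hV => ?_
      obtain ⟨-, hvV⟩ := hV
      have hmem : x + (-(x ⟨0, by omega⟩) / v ⟨0, by omega⟩) • v ∈
          ({z : EuclideanSpace ℝ (Fin d) | ∃ w ∈ V, z = x + w} ∩
            {y : EuclideanSpace ℝ (Fin d) | y ⟨0, by omega⟩ = 0}) := by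
        refine ⟨⟨_, Submodule.smul_mem V _ hvV, rfl⟩, ?_⟩
        show x ⟨0, by omega⟩ + (-(x ⟨0, by omega⟩) / v ⟨0, by omega⟩) * v ⟨0, by omega⟩ = 0
        field_simp
        ring
      refine le_trans (EMetric.infEdist_le_edist_of_mem hmem) (le_of_eq ?_)
      rw [edist_dist, dist_self_add_right]
      congr 1
      rw [norm_smul, Real.norm_eq_abs, abs_div, abs_neg, abs_of_pos hx]
      ring
    · have hle : ENNReal.ofReal (x ⟨0, by omega⟩ * ‖v‖ / |v ⟨0, by omega⟩|) ≤
          EMetric.infEdist x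
            ({z : EuclideanSpace ℝ (Fin d) | ∃ w ∈ V₀, z = x + w} ∩
              {y : EuclideanSpace ℝ (Fin d) | y ⟨0, by omega⟩ = 0}) := by
        rw [EMetric.infEdist, EMetric.le_infEdist]
        rintro z ⟨⟨w, hwV, rfl⟩, hz0⟩
        obtain ⟨c, b, rfl, hb0, hvb⟩ := hV₀prop w hwV
        have hz : x ⟨0, by omega⟩ + c * v ⟨0, by omega⟩ = 0 := by
          have h1 : (x + (c • v + b)) ⟨0, by omega⟩ =
              x ⟨0, by omega⟩ + (c * v ⟨0, by omega⟩ + b ⟨0, by omega⟩) := rfl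
          have h2 : (x + (c • v + b)) ⟨0, by omega⟩ = 0 := hz0
          rw [h1, hb0] at h2
          linarith
        have hc : |c| = x ⟨0, by omega⟩ / |v ⟨0, by omega⟩| := by
          have hcv : c = -(x ⟨0, by omega⟩) / v ⟨0, by omega⟩ := by
            field_simp; linarith
          rw [hcv, abs_div, abs_neg, abs_of_pos hx]
        rw [edist_dist, dist_self_add_right]
        apply ENNReal.ofReal_le_ofReal
        have hsq : ‖c • v + b‖ ^ 2 = ‖c • v‖ ^ 2 + ‖b‖ ^ 2 := by
          rw [norm_add_sq_real, real_inner_smul_left, hvb]; ring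
        have h2 : x ⟨0, by omega⟩ * ‖v‖ / |v ⟨0, by omega⟩| ≤ ‖c • v‖ := by
          rw [norm_smul, Real.norm_eq_abs, hc]
          apply le_of_eq; ring
        nlinarith [norm_nonneg (c • v + b), norm_nonneg (c • v), sq_nonneg ‖b‖]
      exact le_trans hle (le_iSup₂ (f := fun V _ => EMetric.infEdist x
        ({z : EuclideanSpace ℝ (Fin d) | ∃ w ∈ V, z = x + w} ∩
          {y : EuclideanSpace ℝ (Fin d) | y ⟨0, by omega⟩ = 0})) V₀ ⟨hV₀k, hvV₀⟩)
  · intro hv1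
    have hS : ({z : EuclideanSpace ℝ (Fin d) | ∃ w ∈ V₀, z = x + w} ∩
        {y : EuclideanSpace ℝ (Fin d) | y ⟨0, by omega⟩ = 0}) = ∅ := by
      ext z
      simp only [Set.mem_inter_iff, Set.mem_setOf_eq, Set.mem_empty_iff_false, iff_false,
        not_and]
      rintro ⟨w, hwV, rfl⟩
      obtain ⟨c, b, rfl, hb0, hvb⟩ := hV₀prop w hwV
      show ¬ (x ⟨0, by omega⟩ + (c * v ⟨0, by omega⟩ + b ⟨0, by omega⟩) = 0)
      rw [hb0, hv1]
      intro h; rw [mul_zero, add_zero, add_zero] at h; linarith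
    have htop : EMetric.infEdist x
        ({z : EuclideanSpace ℝ (Fin d) | ∃ w ∈ V₀, z = x + w} ∩
          {y : EuclideanSpace ℝ (Fin d) | y ⟨0, by omega⟩ = 0}) = ⊤ := by
      rw [hS, EMetric.infEdist, EMetric.infEdist_empty]
    refine top_le_iff.mp ?_
    refine le_trans (le_of_eq htop.symm) (le_iSup₂ (f := fun V _ => EMetric.infEdist x
      ({z : EuclideanSpace ℝ (Fin d) | ∃ w ∈ V, z = x + w} ∩
        {y : EuclideanSpace ℝ (Fin d) | y ⟨0, by omega⟩ = 0})) V₀ ⟨hV₀k, hvV₀⟩)
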